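/- Let θ ∈ (0,1) be irrational. For t ∈ [0,1) define v_t ∈ {0,1}^{ℕ₀} by v_t(n) = 1 if and only if t + nθ (mod 1) ∈ [1−θ, 1), and let S be the closure of {v_t : t ∈ [0,1)} in the product topology on {0,1}^{ℕ₀}. For τ ∈ S and k ∈ ℕ set r_k(τ) = #{ 0 ≤ i ≤ k−1 : τ(i) = 1 }. Then there exists an integer C > 1 such that for every τ ∈ S and every k ∈ ℕ, |r_k(τ) − k·θ| ≤ C. -/
import Mathlib


open Set Filter
noncomputable section

/-- The binary coding sequence of `t` under the rotation by `θ`: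
`v_t(n) = 1` iff `t + nθ (mod 1) ∈ [1−θ, 1)`. -/
def vseq (θ t : ℝ) : ℕ → Bool := fun n => decide (1 - θ ≤ Int.fract (t + n * θ))

/-- `S`: the closure of `{v_t : t ∈ [0,1)}` in the product topology on `{0,1}^ℕ₀`. -/
def Sset (θ : ℝ) : Set (ℕ → Bool) :=
  closure { v | ∃ t ∈ Set.Ico (0 : ℝ) 1, v = vseq θ t }

/-- `r_k(τ) = #{ 0 ≤ i ≤ k−1 : τ(i) = 1 }`. -/
def rk (τ : ℕ → Bool) (k : ℕ) : ℕ := ((Finset.range k).filter fun i => τ i = true).card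

lemma floor_step (θ x : ℝ) (hθ : θ ∈ Set.Ioo (0 : ℝ) 1) :
    ⌊x + θ⌋ = ⌊x⌋ + (if 1 - θ ≤ Int.fract x then 1 else 0) := by
  obtain ⟨h0, h1⟩ := hθ
  have hx0 : (0:ℝ) ≤ Int.fract x := Int.fract_nonneg x
  have hx1 : Int.fract x < 1 := Int.fract_lt_one x
  have hfx : (⌊x⌋ : ℝ) + Int.fract x = x := Int.floor_add_fract x
  split_ifs with h
  · rw [Int.floor_eq_iff]
    push_cast
    constructor <;> linarith
  · push_neg at h
    rw [add_zero, Int.floor_eq_iff]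
    push_cast
    constructor <;> linarith

lemma rk_vseq (θ t : ℝ) (hθ : θ ∈ Set.Ioo (0 : ℝ) 1) (k : ℕ) :
    (rk (vseq θ t) k : ℤ) = ⌊t + k * θ⌋ - ⌊t⌋ := by
  have key : ∀ i : ℕ, ((if vseq θ t i = true then 1 else 0 : ℤ))
      = ⌊t + (i + 1 : ℕ) * θ⌋ - ⌊t + i * θ⌋ := by
    intro i
    have := floor_step θ (t + i * θ) hθ
    have harg : t + ((i : ℝ) + 1) * θ = (t + i * θ) + θ := by ring
    push_cast
    rw [harg, this]
    simp [vseq]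
  have hsum : (rk (vseq θ t) k : ℤ)
      = ∑ i ∈ Finset.range k, (if vseq θ t i = true then 1 else 0 : ℤ) := by
    rw [rk, Finset.card_filter]
    push_cast
    rfl
  rw [hsum]
  calc ∑ i ∈ Finset.range k, (if vseq θ t i = true then 1 else 0 : ℤ)
      = ∑ i ∈ Finset.range k, (⌊t + (i + 1 : ℕ) * θ⌋ - ⌊t + i * θ⌋) := by
        exact Finset.sum_congr rfl fun i _ => key i
    _ = ⌊t + k * θ⌋ - ⌊t + (0:ℕ) * θ⌋ := Finset.sum_range_sub (fun n => ⌊t + n * θ⌋) k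
    _ = ⌊t + k * θ⌋ - ⌊t⌋ := by norm_num

lemma base_bound (θ t : ℝ) (hθ : θ ∈ Set.Ioo (0 : ℝ) 1) (ht : t ∈ Set.Ico (0 : ℝ) 1)
    (k : ℕ) : |(rk (vseq θ t) k : ℝ) - k * θ| ≤ 2 := by
  have h := rk_vseq θ t hθ k
  have ht0 : ⌊t⌋ = 0 := Int.floor_eq_zero_iff.2 ht
  rw [ht0, sub_zero] at h
  have hcast : (rk (vseq θ t) k : ℝ) = (⌊t + k * θ⌋ : ℝ) := by exact_mod_cast h
  rw [hcast]
  have h1 : (⌊t + k * θ⌋ : ℝ) = (t + k * θ) - Int.fract (t + k * θ) := by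
    rw [Int.self_sub_fract]
  have hf0 : (0:ℝ) ≤ Int.fract (t + k * θ) := Int.fract_nonneg _
  have hf1 : Int.fract (t + k * θ) < 1 := Int.fract_lt_one _
  obtain ⟨ht0', ht1⟩ := ht
  rw [abs_le, h1]
  constructor <;> linarith

theorem stmt9 (θ : ℝ) (hθ : θ ∈ Set.Ioo (0 : ℝ) 1) (hirr : Irrational θ) :
    ∃ C : ℕ, 1 < C ∧ ∀ τ ∈ Sset θ, ∀ k : ℕ, |(rk τ k : ℝ) - k * θ| ≤ C := by
  refine ⟨2, one_lt_two, ?_⟩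
  have hcont : ∀ k : ℕ, Continuous fun τ : ℕ → Bool => (rk τ k : ℝ) := by
    intro k
    have : (fun τ : ℕ → Bool => (rk τ k : ℝ))
        = fun τ => ∑ i ∈ Finset.range k, (if τ i = true then (1:ℝ) else 0) := by
      funext τ
      rw [rk, Finset.card_filter]
      push_cast
      rfl
    rw [this]
    exact continuous_finset_sum _ fun i _ =>
      Continuous.comp (continuous_of_discreteTopology
        (f := fun b : Bool => if b = true then (1:ℝ) else 0)) (continuous_apply i)
  have hclosed : IsClosed {τ : ℕ → Bool | ∀ k : ℕ, |(rk τ k : ℝ) - k * θ| ≤ 2} := by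
    have : {τ : ℕ → Bool | ∀ k : ℕ, |(rk τ k : ℝ) - k * θ| ≤ 2}
        = ⋂ k : ℕ, {τ : ℕ → Bool | |(rk τ k : ℝ) - k * θ| ≤ 2} := by
      ext τ; simp
    rw [this]
    exact isClosed_iInter fun k => isClosed_le
      (((hcont k).sub continuous_const).abs) continuous_const
  have hsub : { v | ∃ t ∈ Set.Ico (0 : ℝ) 1, v = vseq θ t }
      ⊆ {τ : ℕ → Bool | ∀ k : ℕ, |(rk τ k : ℝ) - k * θ| ≤ 2} := by
    rintro v ⟨t, ht, rfl⟩ k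
    exact base_bound θ t hθ ht k
  intro τ hτ k
  have := closure_minimal hsub hclosed hτ
  exact_mod_cast this k
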